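/- An element M_σ of the monomial basis of ℤS is primitive (δ(M_σ) = M_σ ⊗ 1 + 1 ⊗ M_σ) if and only if σ has no global descent, i.e., σ is indecomposable for the product △; and the submodule of primitive elements of ℤS is spanned by these M_σ. -/

import Mathlib

/-- Standardization (0-based): replace each letter by its rank among the letters of `w`. -/
def stW (w : List ℕ) : List ℕ := w.map (fun x => (w.filter (· < x)).length)

/-- `w` is the one-line word of a permutation of `{0, …, n-1}` where `n = w.length`. -/
def IsPermWord (w : List ℕ) : Prop := w.Perm (List.range w.length)

/-- The inversion set of a word: pairs `(j, i)` with `j > i` and `j` to the left of `i`. -/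
def invSet (w : List ℕ) : Set (ℕ × ℕ) :=
  {p | p.2 < p.1 ∧ ∃ k l : ℕ, k < l ∧ w[k]? = some p.1 ∧ w[l]? = some p.2}

/-- The right weak order: inclusion of inversion sets. -/
def weakLe (u v : List ℕ) : Prop := invSet u ⊆ invSet v

/-- Left shifted concatenation `v △ u`: the word `v̄ u`, `v̄` being `v` shifted by `|u|`. -/
def triangle (v u : List ℕ) : List ℕ := v.map (· + u.length) ++ u

/-- Right shifted concatenation `u □ v`: the word `u v̄`, `v̄` being `v` shifted by `|u|`. -/
def squareC (u v : List ℕ) : List ℕ := u ++ v.map (· + u.length)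

lemma nodup_of_isPermWord {w : List ℕ} (h : IsPermWord w) : w.Nodup :=
  h.nodup_iff.mpr (List.nodup_range)

/-- Standardizing a word with distinct letters yields a permutation word. -/
lemma isPermWord_stW {w : List ℕ} (h : w.Nodup) : IsPermWord (stW w) := by
  show (stW w).Perm (List.range (stW w).length)
  classical
  set f : ℕ → ℕ := fun x => (w.filter (· < x)).length with hf
  have hcard : ∀ x, f x = (w.toFinset.filter (· < x)).card := by
    intro x
    rw [hf]
    simp only
    rw [← List.toFinset_card_of_nodup (h.filter _)]
    congr 1
    ext z
    simp [List.mem_filter]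
  have hmono : ∀ x ∈ w, ∀ y ∈ w, x < y → f x < f y := by
    intro x hx y hy hxy
    rw [hcard, hcard]
    apply Finset.card_lt_card
    constructor
    · intro z hz
      simp only [Finset.mem_filter, decide_eq_true_eq] at hz ⊢
      exact ⟨hz.1, lt_trans hz.2 hxy⟩
    · intro hcon
      have hxmem : x ∈ w.toFinset.filter (· < y) := by
        simp only [Finset.mem_filter, decide_eq_true_eq]
        exact ⟨List.mem_toFinset.2 hx, hxy⟩
      have := hcon hxmem
      simp only [Finset.mem_filter, decide_eq_true_eq] at this
      exact lt_irrefl x this.2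
  have hinj : ∀ x ∈ w, ∀ y ∈ w, f x = f y → x = y := by
    intro x hx y hy hxy
    rcases lt_trichotomy x y with h1 | h1 | h1
    · exact absurd hxy (Nat.ne_of_lt (hmono x hx y hy h1))
    · exact h1
    · exact absurd hxy.symm (Nat.ne_of_lt (hmono y hy x hx h1))
  have hltn : ∀ x ∈ w, f x < w.length := by
    intro x hx
    rw [hf]
    simp only
    refine List.length_filter_lt_length_iff_exists.2 ⟨x, hx, by simp⟩
  have hnodup : (stW w).Nodup := List.Nodup.map_on hinj h
  have hlen : (stW w).length = w.length := by simp [stW]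
  rw [hlen]
  refine (List.perm_ext_iff_of_nodup hnodup (List.nodup_range)).2 ?_
  intro k
  simp only [List.mem_range]
  constructor
  · rintro hk
    simp only [stW, List.mem_map] at hk
    obtain ⟨x, hx, rfl⟩ := hk
    exact hltn x hx
  · intro hk
    -- surjectivity via cardinality
    have himage : w.toFinset.image f = Finset.range w.length := by
      apply Finset.eq_of_subset_of_card_le
      · intro m hm
        simp only [Finset.mem_image, List.mem_toFinset] at hm
        obtain ⟨x, hx, rfl⟩ := hm
        exact Finset.mem_range.2 (hltn x hx)
      · rw [Finset.card_range, Finset.card_image_of_injOn ?_]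
        · rw [List.toFinset_card_of_nodup h]
        · intro x hx y hy
          exact hinj x (List.mem_toFinset.1 hx) y (List.mem_toFinset.1 hy)
    have : k ∈ w.toFinset.image f := by rw [himage]; exact Finset.mem_range.2 hk
    simp only [Finset.mem_image, List.mem_toFinset] at this
    obtain ⟨x, hx, rfl⟩ := this
    simp only [stW, List.mem_map]
    exact ⟨x, hx, rfl⟩


lemma isPermWord_stW_filter {w : List ℕ} (h : IsPermWord w)
    (p : ℕ → Bool) : IsPermWord (stW (w.filter p)) :=
  isPermWord_stW ((nodup_of_isPermWord h).filter _)

lemma isPermWord_filter_lt {w : List ℕ} (h : IsPermWord w) (i : ℕ) :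
    IsPermWord (w.filter (· < i)) := by
  have h1 : (w.filter (· < i)).Perm ((List.range w.length).filter (· < i)) := h.filter _
  have h2 : ((List.range w.length).filter (· < i)).Perm (List.range (min i w.length)) := by
    refine (List.perm_ext_iff_of_nodup ((List.nodup_range).filter _) (List.nodup_range)).2 ?_
    intro x
    simp only [List.mem_filter, List.mem_range, decide_eq_true_eq, lt_min_iff]
    tauto
  have h3 := h1.trans h2
  have hl : (w.filter (· < i)).length = min i w.length := by simpa using h3.length_eq
  unfold IsPermWord
  rw [hl]; exact h3

/-- The type of permutation words. -/
abbrev PW : Type := {w : List ℕ // IsPermWord w}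

/-- `ℤS`: the free `ℤ`-module on the set of all permutations. -/
abbrev ZS : Type := PW →₀ ℤ

open scoped TensorProduct

/-- The coproduct on a basis permutation:
`δ(σ) = Σ_{0 ≤ i ≤ n} σ|{1,…,i} ⊗ st(σ|{i+1,…,n})`. -/
noncomputable def deltaWord (w : PW) : ZS ⊗[ℤ] ZS :=
  ∑ i ∈ Finset.range (w.1.length + 1),
    Finsupp.single (⟨w.1.filter (· < i), isPermWord_filter_lt w.2 i⟩ : PW) (1 : ℤ) ⊗ₜ
      Finsupp.single
        (⟨stW (w.1.filter (fun x => i ≤ x)), isPermWord_stW_filter w.2 _⟩ : PW) (1 : ℤ)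

/-- The coproduct `δ` of the Malvenuto–Reutenauer Hopf algebra `ℤS`
(standardized unshuffling), as a `ℤ`-linear map. -/
noncomputable def Delta : ZS →ₗ[ℤ] ZS ⊗[ℤ] ZS :=
  Finsupp.lsum ℤ (fun w => LinearMap.toSpanSingleton ℤ _ (deltaWord w))

/-- The finite set of all permutation words of `{0,…,n-1}`. -/
def permsOf (n : ℕ) : Finset (List ℕ) := (List.range n).permutations.toFinset

/-- A nonempty permutation word is `△`-indecomposable (equivalently, it has no
global descent). -/
def TriIndec (w : List ℕ) : Prop :=
  w ≠ [] ∧ ∀ u v : List ℕ, IsPermWord u → IsPermWord v → w = triangle v u → u = [] ∨ v = []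

/-- The unit of `ℤS`: the empty permutation. -/
noncomputable def oneZS : ZS := Finsupp.single ⟨[], by simp [IsPermWord]⟩ 1


section ListLemmas

open List

lemma sublist_pair_iff {b a : ℕ} {w : List ℕ} :
    [b, a] <+ w ↔ ∃ k l : ℕ, k < l ∧ w[k]? = some b ∧ w[l]? = some a := by
  constructor
  · intro h
    induction w with
    | nil => simp at h
    | cons x t ih =>
      cases h with
      | cons _ h' =>
        obtain ⟨k, l, hkl, hk, hl⟩ := ih h'
        exact ⟨k + 1, l + 1, by omega, by simpa using hk, by simpa using hl⟩
      | cons_cons _ h' =>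
        have ha : a ∈ t := h'.subset (by simp)
        obtain ⟨l, hl, he⟩ := List.getElem_of_mem ha
        exact ⟨0, l + 1, by omega, by simp, by simp [List.getElem?_eq_getElem hl, he]⟩
  · rintro ⟨k, l, hkl, hk, hl⟩
    induction w generalizing k l with
    | nil => simp at hk
    | cons x t ih =>
      match k, l with
      | 0, l + 1 =>
        simp only [List.getElem?_cons_zero, Option.some.injEq] at hk
        simp only [List.getElem?_cons_succ] at hl
        subst hk
        have ha : a ∈ t := by
          rw [List.getElem?_eq_some_iff] at hl
          obtain ⟨h1, h2⟩ := hl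
          exact h2 ▸ List.getElem_mem h1
        exact (List.singleton_sublist.2 ha).cons₂ _
      | k + 1, l + 1 =>
        simp only [List.getElem?_cons_succ] at hk hl
        exact (ih k l (by omega) hk hl).cons x

lemma mem_invSet {w : List ℕ} {p : ℕ × ℕ} :
    p ∈ invSet w ↔ p.2 < p.1 ∧ [p.1, p.2] <+ w := by
  unfold invSet
  rw [Set.mem_setOf_eq, sublist_pair_iff]

lemma invSet_sublist {u w : List ℕ} (h : u <+ w) : invSet u ⊆ invSet w := by
  intro p hp
  rw [mem_invSet] at hp ⊢
  exact ⟨hp.1, hp.2.trans h⟩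

lemma fst_mem_of_invSet {w : List ℕ} {p : ℕ × ℕ} (h : p ∈ invSet w) : p.1 ∈ w :=
  (mem_invSet.1 h).2.subset (by simp)

lemma snd_mem_of_invSet {w : List ℕ} {p : ℕ × ℕ} (h : p ∈ invSet w) : p.2 ∈ w :=
  (mem_invSet.1 h).2.subset (by simp)

lemma permword_mem_iff {w : List ℕ} (h : IsPermWord w) {x : ℕ} :
    x ∈ w ↔ x < w.length := by
  rw [h.mem_iff, List.mem_range]

/-- splitting a `[b,a]` sublist of an append when both letters avoid the left side -/
lemma sublist_pair_right {b a : ℕ} {x y : List ℕ} (h : [b, a] <+ x ++ y)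
    (hb : b ∉ x) : [b, a] <+ y := by
  rw [List.sublist_append_iff] at h
  obtain ⟨l₁, l₂, heq, h1, h2⟩ := h
  rcases l₁ with _ | ⟨c, l₁⟩
  · have hl : l₂ = [b, a] := by simpa using heq.symm
    exact hl ▸ h2
  · have hc : c = b := by simpa using congrArg (·.head?) heq.symm
    subst hc
    exact absurd (h1.subset (by simp)) hb

lemma sublist_pair_left {b a : ℕ} {x y : List ℕ} (h : [b, a] <+ x ++ y)
    (ha : a ∉ y) : [b, a] <+ x := by
  rw [List.sublist_append_iff] at h
  obtain ⟨l₁, l₂, heq, h1, h2⟩ := h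
  rcases List.eq_nil_or_concat l₂ with rfl | ⟨l₂', z, rfl⟩
  · rw [List.append_nil] at heq; exact heq ▸ h1
  · have hz : z = a := by
      have := congrArg (·.getLast?) heq
      simpa [List.getLast?_concat] using this.symm
    subst hz
    exact absurd (h2.subset (by simp)) ha

end ListLemmas

section CountLemmas

open List

lemma count_range_lt (x n : ℕ) : ((List.range n).filter (· < x)).length = min x n := by
  induction n with
  | zero => simp
  | succ n ih =>
    rw [List.range_succ, List.filter_append]
    by_cases h : n < x
    · simp [h, ih]; omega
    · simp [h, ih]; omega

lemma count_range_ge (i n : ℕ) : ((List.range n).filter (fun x => i ≤ x)).length = n - i := by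
  induction n with
  | zero => simp
  | succ n ih =>
    rw [List.range_succ, List.filter_append]
    by_cases h : i ≤ n
    · simp [h, ih]; omega
    · simp [h, ih]; omega

lemma count_range_band (p x n : ℕ) :
    ((List.range n).filter (fun a => decide (a < x) && decide (p ≤ a))).length
      = min x n - min p n := by
  induction n with
  | zero => simp
  | succ n ih =>
    rw [List.range_succ, List.filter_append]
    by_cases h1 : p ≤ n <;> by_cases h2 : n < x <;> simp [h1, h2, ih] <;> omega

lemma length_filter_permword {w : List ℕ} (h : IsPermWord w) (q : ℕ → Bool) :
    (w.filter q).length = ((List.range w.length).filter q).length := by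
  rw [← List.countP_eq_length_filter, ← List.countP_eq_length_filter]
  exact h.countP_eq q

lemma length_filter_lt' {w : List ℕ} (h : IsPermWord w) (i : ℕ) :
    (w.filter (· < i)).length = min i w.length := by
  rw [length_filter_permword h, count_range_lt]

lemma length_filter_ge' {w : List ℕ} (h : IsPermWord w) (i : ℕ) :
    (w.filter (fun x => i ≤ x)).length = w.length - i := by
  rw [length_filter_permword h, count_range_ge]

lemma stW_eq_self {w : List ℕ} (h : IsPermWord w) : stW w = w := by
  unfold stW
  have h' : ∀ x ∈ w, (w.filter (· < x)).length = id x := by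
    intro x hx
    rw [length_filter_lt' h]
    have := (permword_mem_iff h).1 hx
    simp; omega
  rw [List.map_congr_left h', List.map_id]

lemma stW_filter_ge {w : List ℕ} (h : IsPermWord w) (p : ℕ) :
    stW (w.filter (fun x => p ≤ x)) = (w.filter (fun x => p ≤ x)).map (· - p) := by
  unfold stW
  apply List.map_congr_left
  intro x hx
  rw [List.filter_filter]
  have hx' := List.mem_filter.1 hx
  have hp : p ≤ x := by simpa using hx'.2
  have hxw : x < w.length := (permword_mem_iff h).1 hx'.1
  rw [length_filter_permword h, count_range_band]
  omega

lemma stW_map_add (v : List ℕ) (i : ℕ) : stW (v.map (· + i)) = stW v := by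
  unfold stW
  rw [List.map_map]
  apply List.map_congr_left
  intro x hx
  simp only [Function.comp]
  rw [List.filter_map]
  rw [List.length_map]
  congr 1
  apply List.filter_congr
  intro a _
  simp only [Function.comp]
  simp [Nat.add_lt_add_iff_right]

end CountLemmas

section TriangleLemmas

open List

lemma triangle_isPermWord {u v : List ℕ} (hu : IsPermWord u) (hv : IsPermWord v) :
    IsPermWord (triangle v u) := by
  unfold IsPermWord triangle
  rw [List.length_append, List.length_map]
  have h1 : (v.map (· + u.length)).Perm ((List.range v.length).map (· + u.length)) :=
    hv.map _
  have h2 : ((List.range v.length).map (· + u.length))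
      = (List.range v.length).map (u.length + ·) := by
    apply List.map_congr_left; intro a _; omega
  calc v.map (· + u.length) ++ u
      ~ (List.range v.length).map (u.length + ·) ++ u := by
        exact (h1.trans (h2 ▸ List.Perm.refl _)).append (List.Perm.refl u)
    _ ~ u ++ (List.range v.length).map (u.length + ·) := List.perm_append_comm
    _ ~ List.range u.length ++ (List.range v.length).map (u.length + ·) :=
        hu.append (List.Perm.refl _)
    _ = List.range (u.length + v.length) := List.range_add.symm
    _ = List.range (v.length + u.length) := by rw [Nat.add_comm]

lemma triangle_filter_lt {u v : List ℕ} (hu : IsPermWord u) :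
    (triangle v u).filter (· < u.length) = u := by
  unfold triangle
  rw [List.filter_append]
  have h1 : (v.map (· + u.length)).filter (· < u.length) = [] := by
    rw [List.filter_eq_nil_iff]
    intro a ha
    obtain ⟨x, _, rfl⟩ := List.mem_map.1 ha
    simp
  have h2 : u.filter (· < u.length) = u := by
    rw [List.filter_eq_self]
    intro a ha
    simpa using (permword_mem_iff hu).1 ha
  rw [h1, h2, List.nil_append]

lemma triangle_filter_ge {u v : List ℕ} (hu : IsPermWord u) :
    (triangle v u).filter (fun x => u.length ≤ x) = v.map (· + u.length) := by
  unfold triangle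
  rw [List.filter_append]
  have h1 : (v.map (· + u.length)).filter (fun x => u.length ≤ x) = v.map (· + u.length) := by
    rw [List.filter_eq_self]
    intro a ha
    obtain ⟨x, _, rfl⟩ := List.mem_map.1 ha
    simp
  have h2 : u.filter (fun x => u.length ≤ x) = [] := by
    rw [List.filter_eq_nil_iff]
    intro a ha
    have := (permword_mem_iff hu).1 ha
    simpa using this
  rw [h1, h2, List.append_nil]

lemma stW_triangle_ge {u v : List ℕ} (hu : IsPermWord u) (hv : IsPermWord v) :
    stW ((triangle v u).filter (fun x => u.length ≤ x)) = v := by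
  rw [triangle_filter_ge hu, stW_map_add, stW_eq_self hv]

end TriangleLemmas

section Antisym

open List

lemma invSet_cons_of_not_mem {x : ℕ} {t : List ℕ} (hx : x ∉ t) :
    invSet t = {p ∈ invSet (x :: t) | p.1 ≠ x} := by
  ext ⟨b, a⟩
  simp only [Set.mem_setOf_eq, mem_invSet]
  constructor
  · rintro ⟨hlt, hsub⟩
    refine ⟨⟨hlt, hsub.cons x⟩, ?_⟩
    intro hbx
    subst hbx
    exact hx (hsub.subset (by simp))
  · rintro ⟨⟨hlt, hsub⟩, hne⟩
    refine ⟨hlt, ?_⟩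
    have hsub' : [b, a] <+ [x] ++ t := by simpa using hsub
    exact sublist_pair_right hsub' (by simpa using hne)

lemma eq_of_invSet_eq : ∀ {u v : List ℕ}, u.Nodup → u.Perm v → invSet u = invSet v → u = v := by
  intro u
  induction u with
  | nil =>
    intro v _ hp _
    exact (List.Perm.nil_eq hp).symm ▸ rfl
  | cons x t ih =>
    intro v hnd hp hinv
    have hxv : x ∈ v := hp.subset (by simp)
    obtain ⟨l1, l2, rfl⟩ := List.append_of_mem hxv
    have hndv : (l1 ++ x :: l2).Nodup := hp.nodup_iff.1 hnd
    have hxt : x ∉ t := (List.nodup_cons.1 hnd).1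
    have hxl1 : x ∉ l1 := by
      intro hmem
      exact (List.nodup_append.1 hndv).2.2 x hmem x (by simp) rfl
    have hxl2 : x ∉ l2 := by
      have := (List.nodup_append.1 hndv).2.1
      exact (List.nodup_cons.1 this).1
    have hl1 : l1 = [] := by
      rcases l1 with _ | ⟨a, l1'⟩
      · rfl
      · exfalso
        have hav : a ∈ a :: l1' := by simp
        have hat : a ∈ t := by
          have : a ∈ x :: t := hp.symm.subset (by simp)
          have hax : a ≠ x := fun h => hxl1 (h ▸ hav)
          simpa [hax] using this
        have hal2 : a ∉ l2 := by
          intro hmem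
          exact (List.nodup_append.1 hndv).2.2 a hav a (by simp [hmem]) rfl
        have hax : a ≠ x := fun h => hxl1 (h ▸ hav)
        rcases Nat.lt_or_ge a x with hax' | hax'
        · -- (x, a) ∈ invSet (x :: t) = invSet v, but x before a fails in v
          have h1 : ((x, a) : ℕ × ℕ) ∈ invSet (x :: t) :=
            mem_invSet.2 ⟨hax', (List.singleton_sublist.2 hat).cons₂ x⟩
          have h2 := (mem_invSet.1 (hinv ▸ h1)).2
          have h3 : [x, a] <+ x :: l2 := sublist_pair_right h2 hxl1
          cases h3 with
          | cons _ h => exact hxl2 (h.subset (by simp))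
          | cons_cons _ h => exact hal2 (by simpa using h.subset (by simp))
        · have hax'' : x < a := by omega
          have h1 : ((a, x) : ℕ × ℕ) ∈ invSet (a :: l1' ++ x :: l2) := by
            refine mem_invSet.2 ⟨hax'', ?_⟩
            have : ([a] ++ [x] : List ℕ) <+ (a :: l1') ++ (x :: l2) :=
              List.Sublist.append (List.singleton_sublist.2 hav) (List.singleton_sublist.2 (by simp))
            simpa using this
          have h1' : ((a, x) : ℕ × ℕ) ∈ invSet (x :: t) := by rw [hinv]; exact h1
          have h2 := (mem_invSet.1 h1').2
          have h2' : [a, x] <+ [x] ++ t := by simpa using h2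
          have h3 := sublist_pair_right h2' (by simpa using hax)
          exact hxt (h3.subset (by simp))
    subst hl1
    simp only [List.nil_append] at hp hinv hndv ⊢
    have hp' : t.Perm l2 := hp.cons_inv
    have hinv' : invSet t = invSet l2 := by
      rw [invSet_cons_of_not_mem hxt, invSet_cons_of_not_mem hxl2, hinv]
    rw [ih (List.nodup_cons.1 hnd).2 hp' hinv']

lemma weakLe_antisymm {u v : List ℕ} (hu : IsPermWord u) (hv : IsPermWord v)
    (hlen : u.length = v.length) (h1 : weakLe u v) (h2 : weakLe v u) : u = v := by
  apply eq_of_invSet_eq (nodup_of_isPermWord hu)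
  · exact hu.trans (hlen ▸ hv.symm)
  · exact Set.Subset.antisymm h1 h2

end Antisym

section KeyLemma

open List

lemma key_lemma {σ c d : List ℕ} (hσ : IsPermWord σ) (hc : IsPermWord c) (hd : IsPermWord d)
    (hlen : σ.length = c.length + d.length) :
    weakLe σ (triangle d c) ↔
      weakLe (σ.filter (· < c.length)) c ∧
        weakLe (stW (σ.filter (fun x => c.length ≤ x))) d := by
  have hB : stW (σ.filter (fun x => c.length ≤ x))
      = (σ.filter (fun x => c.length ≤ x)).map (· - c.length) := stW_filter_ge hσ c.length
  have htri : triangle d c = d.map (· + c.length) ++ c := rfl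
  have hmemc : ∀ x, x ∈ c ↔ x < c.length := fun x => permword_mem_iff hc
  have hmemd : ∀ x, x ∈ d ↔ x < d.length := fun x => permword_mem_iff hd
  have hmemσ : ∀ x, x ∈ σ ↔ x < σ.length := fun x => permword_mem_iff hσ
  constructor
  · intro h
    constructor
    · rintro ⟨b, a⟩ hpr
      rw [mem_invSet] at hpr ⊢
      obtain ⟨hlt, hsub⟩ := hpr
      simp only at hlt hsub ⊢
      have hbp : b < c.length := by
        have : b ∈ σ.filter (· < c.length) := hsub.subset (by simp)
        simpa using (List.mem_filter.1 this).2
      have h1 : [b, a] <+ σ := hsub.trans List.filter_sublist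
      have h2 : [b, a] <+ triangle d c :=
        (mem_invSet.1 (h (show ((b, a) : ℕ × ℕ) ∈ invSet σ from mem_invSet.2 ⟨hlt, h1⟩))).2
      rw [htri] at h2
      refine ⟨hlt, sublist_pair_right h2 ?_⟩
      intro hmem
      obtain ⟨y, _, hy⟩ := List.mem_map.1 hmem
      omega
    · rintro ⟨b, a⟩ hpr
      rw [mem_invSet] at hpr
      obtain ⟨hlt, hsub⟩ := hpr
      simp only at hlt hsub
      rw [hB, List.sublist_map_iff] at hsub
      obtain ⟨l', hsub', heq⟩ := hsub
      rcases l' with _ | ⟨b₀, _ | ⟨a₀, _ | ⟨z, l''⟩⟩⟩ <;> simp at heq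
      obtain ⟨hb₀, ha₀⟩ := heq
      have hb₀m : b₀ ∈ σ.filter (fun x => c.length ≤ x) := hsub'.subset (by simp)
      have ha₀m : a₀ ∈ σ.filter (fun x => c.length ≤ x) := hsub'.subset (by simp)
      have hb₀p : c.length ≤ b₀ := by simpa using (List.mem_filter.1 hb₀m).2
      have ha₀p : c.length ≤ a₀ := by simpa using (List.mem_filter.1 ha₀m).2
      have hb₀e : b₀ = b + c.length := by omega
      have ha₀e : a₀ = a + c.length := by omega
      have h1 : [b₀, a₀] <+ σ := hsub'.trans List.filter_sublist
      have h2 : ((b₀, a₀) : ℕ × ℕ) ∈ invSet σ := mem_invSet.2 ⟨by simp; omega, h1⟩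
      have h3 := (mem_invSet.1 (h h2)).2
      simp only at h3
      rw [htri] at h3
      have h4 : [b₀, a₀] <+ d.map (· + c.length) := by
        apply sublist_pair_left h3
        rw [hmemc]
        omega
      rw [List.sublist_map_iff] at h4
      obtain ⟨l₂, hsub₂, heq₂⟩ := h4
      rcases l₂ with _ | ⟨b₁, _ | ⟨a₁, _ | ⟨z, l₃⟩⟩⟩ <;> simp at heq₂
      obtain ⟨hb₁, ha₁⟩ := heq₂
      rw [mem_invSet]
      refine ⟨hlt, ?_⟩
      have : b₁ = b ∧ a₁ = a := by omega
      simpa [this.1, this.2] using hsub₂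
  · rintro ⟨h1, h2⟩ ⟨b, a⟩ hpr
    rw [mem_invSet] at hpr ⊢
    obtain ⟨hlt, hsub⟩ := hpr
    simp only at hlt hsub ⊢
    have hbσ : b < σ.length := (hmemσ b).1 (hsub.subset (by simp))
    have haσ : a < σ.length := (hmemσ a).1 (hsub.subset (by simp))
    refine ⟨hlt, ?_⟩
    rw [htri]
    by_cases hb : b < c.length
    · have hfil : [b, a] <+ σ.filter (· < c.length) := by
        have h' := List.Sublist.filter (· < c.length) hsub
        have : ([b, a] : List ℕ).filter (· < c.length) = [b, a] := by
          simp only [List.filter]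
          have : a < c.length := by omega
          simp [hb, this]
        rwa [this] at h'
      have h3 := (mem_invSet.1 (h1 (show ((b, a) : ℕ × ℕ) ∈ invSet _ from
        mem_invSet.2 ⟨hlt, hfil⟩))).2
      exact h3.trans (List.sublist_append_right _ _)
    · by_cases ha : c.length ≤ a
      · have hbcl : c.length ≤ b := by omega
        have hfil : [b, a] <+ σ.filter (fun x => c.length ≤ x) := by
          have h' := List.Sublist.filter (fun x => c.length ≤ x) hsub
          have : ([b, a] : List ℕ).filter (fun x => c.length ≤ x) = [b, a] := by
            simp only [List.filter]
            simp [ha, hbcl]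
          rwa [this] at h'
        have hmm : ((b - c.length, a - c.length) : ℕ × ℕ) ∈ invSet (stW (σ.filter (fun x => c.length ≤ x))) := by
          rw [hB, mem_invSet]
          constructor
          · simp; omega
          · have := hfil.map (· - c.length)
            simpa using this
        have h4 := (mem_invSet.1 (h2 hmm)).2
        simp only at h4
        have h5 := h4.map (· + c.length)
        simp only [List.map_cons, List.map_nil] at h5
        have e1 : b - c.length + c.length = b := by omega
        have e2 : a - c.length + c.length = a := by omega
        rw [e1, e2] at h5
        exact h5.trans (List.sublist_append_left _ _)
      · have hbd : b ∈ d.map (· + c.length) := by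
          apply List.mem_map.2
          refine ⟨b - c.length, ?_, by omega⟩
          rw [hmemd]
          omega
        have hac : a ∈ c := by
          rw [hmemc]
          omega
        have : ([b] ++ [a] : List ℕ) <+ d.map (· + c.length) ++ c :=
          List.Sublist.append (List.singleton_sublist.2 hbd) (List.singleton_sublist.2 hac)
        simpa using this
end KeyLemma

section CondS

open List

/-- `w` splits at `i` as a shifted concatenation. -/
def condS (w : List ℕ) (i : ℕ) : Prop :=
  w = triangle (stW (w.filter (fun x => i ≤ x))) (w.filter (· < i))

lemma condS_triangle {u v : List ℕ} (hu : IsPermWord u) (hv : IsPermWord v) :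
    condS (triangle v u) u.length := by
  unfold condS
  rw [triangle_filter_lt hu, stW_triangle_ge hu hv]

lemma condS_iff {w : List ℕ} (h : IsPermWord w) {i : ℕ} (hi : i ≤ w.length) :
    condS w i ↔ ∃ u v : List ℕ, IsPermWord u ∧ IsPermWord v ∧ u.length = i ∧ w = triangle v u := by
  constructor
  · intro hc
    refine ⟨w.filter (· < i), stW (w.filter (fun x => i ≤ x)),
      isPermWord_filter_lt h i, isPermWord_stW_filter h _, ?_, hc⟩
    rw [length_filter_lt' h]
    omega
  · rintro ⟨u, v, hu, hv, rfl, rfl⟩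
    exact condS_triangle hu hv

lemma mem_permsOf {w : List ℕ} {n : ℕ} :
    w ∈ permsOf n ↔ IsPermWord w ∧ w.length = n := by
  unfold permsOf
  rw [List.mem_toFinset, List.mem_permutations]
  constructor
  · intro h
    have hl : w.length = n := by simpa using h.length_eq
    exact ⟨by rw [IsPermWord, hl]; exact h, hl⟩
  · rintro ⟨h, rfl⟩
    exact h

lemma weakLe_refl (w : List ℕ) : weakLe w w := Set.Subset.refl _

lemma mem_self_permsOf (σ : PW) : σ.1 ∈ permsOf σ.1.length :=
  mem_permsOf.2 ⟨σ.2, rfl⟩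

end CondS

section Measure

open scoped Classical in
noncomputable def invFin (w : List ℕ) : Finset (ℕ × ℕ) :=
  (Finset.range w.length ×ˢ Finset.range w.length).filter (· ∈ invSet w)

lemma mem_invFin {w : List ℕ} (h : IsPermWord w) {p : ℕ × ℕ} :
    p ∈ invFin w ↔ p ∈ invSet w := by
  classical
  unfold invFin
  rw [Finset.mem_filter]
  simp only [Finset.mem_product, Finset.mem_range]
  constructor
  · exact fun h => h.2
  · intro hp
    exact ⟨⟨(permword_mem_iff h).1 (fst_mem_of_invSet hp),
      (permword_mem_iff h).1 (snd_mem_of_invSet hp)⟩, hp⟩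

noncomputable def wMeasure (w : List ℕ) : ℕ := w.length * w.length - (invFin w).card

lemma wMeasure_lt {u w : List ℕ} (hu : IsPermWord u) (hw : IsPermWord w)
    (hlen : u.length = w.length) (hle : weakLe u w) (hne : u ≠ w) :
    wMeasure w < wMeasure u := by
  have hsub : invFin u ⊆ invFin w := fun p hp => (mem_invFin hw).2 (hle ((mem_invFin hu).1 hp))
  have hssub : invFin u ⊂ invFin w := by
    refine ⟨hsub, fun hsub' => hne ?_⟩
    apply weakLe_antisymm hu hw hlen hle
    intro p hp
    exact (mem_invFin hu).1 (hsub' ((mem_invFin hw).2 hp))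
  have h1 : (invFin u).card < (invFin w).card := Finset.card_lt_card hssub
  have h2 : (invFin w).card ≤ w.length * w.length := by
    classical
    calc (invFin w).card ≤ (Finset.range w.length ×ˢ Finset.range w.length).card :=
          Finset.card_filter_le _ _
      _ = w.length * w.length := by simp
  unfold wMeasure
  rw [hlen]
  omega

end Measure

section DeltaComp

open scoped Classical TensorProduct

/-- The candidate coproduct of a monomial basis element, in terms of `M`. -/
noncomputable def Dsum (M : List ℕ → ZS) (w : List ℕ) : ZS ⊗[ℤ] ZS :=
  ∑ i ∈ Finset.range (w.length + 1),
    if condS w i then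
      M (w.filter (· < i)) ⊗ₜ[ℤ] M (stW (w.filter (fun x => i ≤ x)))
    else 0

lemma Delta_single (σ : PW) : Delta (Finsupp.single σ (1 : ℤ)) = deltaWord σ := by
  unfold Delta
  rw [Finsupp.lsum_single, LinearMap.toSpanSingleton_apply, one_smul]

lemma length_stW (w : List ℕ) : (stW w).length = w.length := by
  unfold stW; rw [List.length_map]

lemma deltaF (M : List ℕ → ZS)
    (hM : ∀ σ : PW, Finsupp.single σ (1 : ℤ) =
      ∑ w ∈ permsOf σ.1.length, if weakLe σ.1 w then M w else 0) (σ : PW) :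
    Delta (Finsupp.single σ (1 : ℤ)) =
      ∑ w ∈ permsOf σ.1.length, if weakLe σ.1 w then Dsum M w else 0 := by
  set n := σ.1.length with hn
  rw [Delta_single]
  unfold deltaWord
  -- rewrite RHS as double sum over i and w
  have hRHS : ∑ w ∈ permsOf n, (if weakLe σ.1 w then Dsum M w else 0)
      = ∑ i ∈ Finset.range (n + 1), ∑ w ∈ permsOf n,
          (if weakLe σ.1 w ∧ condS w i then
            M (w.filter (· < i)) ⊗ₜ[ℤ] M (stW (w.filter (fun x => i ≤ x))) else 0) := by
    rw [Finset.sum_comm]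
    apply Finset.sum_congr rfl
    intro w hw
    obtain ⟨hwp, hwl⟩ := mem_permsOf.1 hw
    by_cases h : weakLe σ.1 w
    · rw [if_pos h]
      unfold Dsum
      rw [hwl]
      apply Finset.sum_congr rfl
      intro i _
      simp [h]
    · rw [if_neg h]
      rw [Finset.sum_eq_zero]
      intro i _
      simp [h]
  rw [hRHS]
  apply Finset.sum_congr rfl
  intro i hi
  have hin : i ≤ n := by
    have := Finset.mem_range.1 hi; omega
  -- the left factor
  set A : List ℕ := σ.1.filter (· < i) with hA
  set B : List ℕ := stW (σ.1.filter (fun x => i ≤ x)) with hB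
  have hAperm : IsPermWord A := isPermWord_filter_lt σ.2 i
  have hBperm : IsPermWord B := isPermWord_stW_filter σ.2 _
  have hAlen : A.length = i := by
    rw [hA, length_filter_lt' σ.2]; omega
  have hBlen : B.length = n - i := by
    rw [hB, length_stW, length_filter_ge' σ.2]
  have hMA := hM ⟨A, hAperm⟩
  have hMB := hM ⟨B, hBperm⟩
  simp only at hMA hMB
  rw [hAlen] at hMA
  rw [hBlen] at hMB
  rw [hMA, hMB, TensorProduct.sum_tmul]
  have step : ∀ c ∈ permsOf i, (if weakLe A c then M c else 0) ⊗ₜ[ℤ]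
      (∑ d ∈ permsOf (n - i), if weakLe B d then M d else 0)
      = ∑ d ∈ permsOf (n - i),
          if weakLe A c ∧ weakLe B d then M c ⊗ₜ[ℤ] M d else 0 := by
    intro c _
    rw [TensorProduct.tmul_sum]
    apply Finset.sum_congr rfl
    intro d _
    by_cases h1 : weakLe A c <;> by_cases h2 : weakLe B d <;> simp [h1, h2]
  rw [Finset.sum_congr rfl step, ← Finset.sum_product', ← Finset.sum_filter, ← Finset.sum_filter]
  have hslen : σ.1.length = i + (n - i) := by omega
  apply Finset.sum_nbij' (i := fun x : List ℕ × List ℕ => triangle x.2 x.1)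
    (j := fun w : List ℕ => (w.filter (· < i), stW (w.filter (fun x => i ≤ x))))
  · rintro ⟨c, d⟩ hx
    rw [Finset.mem_filter, Finset.mem_product] at hx
    obtain ⟨⟨hcm, hdm⟩, h1, h2⟩ := hx
    obtain ⟨hc, hcl⟩ := mem_permsOf.1 hcm
    obtain ⟨hd, hdl⟩ := mem_permsOf.1 hdm
    simp only at h1 h2
    rw [Finset.mem_filter]
    refine ⟨mem_permsOf.2 ⟨triangle_isPermWord hc hd, ?_⟩, ?_, ?_⟩
    · unfold triangle
      rw [List.length_append, List.length_map]
      omega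
    · rw [key_lemma σ.2 hc hd (by omega), hcl]
      exact ⟨h1, h2⟩
    · have := condS_triangle hc hd
      rwa [hcl] at this
  · intro w hw
    rw [Finset.mem_filter] at hw
    obtain ⟨hwm, hle, hcs⟩ := hw
    obtain ⟨hwp, hwl⟩ := mem_permsOf.1 hwm
    have hul : (w.filter (· < i)).length = i := by
      rw [length_filter_lt' hwp]; omega
    have hvl : (stW (w.filter (fun x => i ≤ x))).length = n - i := by
      rw [length_stW, length_filter_ge' hwp, hwl]
    rw [Finset.mem_filter, Finset.mem_product]
    have hup : IsPermWord (w.filter (· < i)) := isPermWord_filter_lt hwp i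
    have hvp : IsPermWord (stW (w.filter (fun x => i ≤ x))) := isPermWord_stW_filter hwp _
    refine ⟨⟨mem_permsOf.2 ⟨hup, hul⟩, mem_permsOf.2 ⟨hvp, hvl⟩⟩, ?_⟩
    have hkey := key_lemma σ.2 hup hvp (by rw [hul, hvl]; omega)
    rw [hul] at hkey
    rw [← hcs] at hkey
    exact hkey.1 hle
  · rintro ⟨c, d⟩ hx
    rw [Finset.mem_filter, Finset.mem_product] at hx
    obtain ⟨⟨hcm, hdm⟩, _, _⟩ := hx
    obtain ⟨hc, hcl⟩ := mem_permsOf.1 hcm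
    obtain ⟨hd, hdl⟩ := mem_permsOf.1 hdm
    have e1 := triangle_filter_lt (v := d) hc
    have e2 := stW_triangle_ge hc hd
    rw [hcl] at e1 e2
    simp only [e1, e2]
  · intro w hw
    rw [Finset.mem_filter] at hw
    exact hw.2.2.symm
  · rintro ⟨c, d⟩ hx
    rw [Finset.mem_filter, Finset.mem_product] at hx
    obtain ⟨⟨hcm, hdm⟩, _, _⟩ := hx
    obtain ⟨hc, hcl⟩ := mem_permsOf.1 hcm
    obtain ⟨hd, hdl⟩ := mem_permsOf.1 hdm
    have e1 := triangle_filter_lt (v := d) hc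
    have e2 := stW_triangle_ge hc hd
    rw [hcl] at e1 e2
    simp only [e1, e2]

end DeltaComp

section DeltaM

open scoped Classical TensorProduct

lemma deltaM (M : List ℕ → ZS)
    (hM : ∀ σ : PW, Finsupp.single σ (1 : ℤ) =
      ∑ w ∈ permsOf σ.1.length, if weakLe σ.1 w then M w else 0) :
    ∀ σ : PW, Delta (M σ.1) = Dsum M σ.1 := by
  suffices H : ∀ k : ℕ, ∀ σ : PW, wMeasure σ.1 ≤ k → Delta (M σ.1) = Dsum M σ.1 by
    exact fun σ => H (wMeasure σ.1) σ le_rfl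
  intro k
  induction k using Nat.strong_induction_on with
  | _ k ih =>
    intro σ hk
    set n := σ.1.length with hn
    have hmem : σ.1 ∈ permsOf n := mem_self_permsOf σ
    have hsplit := (Finset.add_sum_erase (permsOf n)
      (fun w => if weakLe σ.1 w then M w else 0) hmem).symm
    rw [if_pos (weakLe_refl σ.1)] at hsplit
    -- M σ.1 = single σ 1 - ∑ erase
    have hMeq : M σ.1 = Finsupp.single σ (1 : ℤ)
        - ∑ w ∈ (permsOf n).erase σ.1, (if weakLe σ.1 w then M w else 0) := by
      rw [hM σ, ← hn, hsplit]
      abel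
    -- erase-sum terms: Delta (M w) = Dsum M w whenever the guard holds
    have hterm : ∀ w ∈ (permsOf n).erase σ.1,
        Delta (if weakLe σ.1 w then M w else 0)
          = (if weakLe σ.1 w then Dsum M w else 0) := by
      intro w hw
      obtain ⟨hne, hwp⟩ := Finset.mem_erase.1 hw
      obtain ⟨hwperm, hwl⟩ := mem_permsOf.1 hwp
      by_cases hle : weakLe σ.1 w
      · rw [if_pos hle, if_pos hle]
        have hlt : wMeasure w < wMeasure σ.1 :=
          wMeasure_lt σ.2 hwperm (by omega) hle (fun h => hne h.symm)
        exact ih (wMeasure w) (by omega) ⟨w, hwperm⟩ le_rfl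
      · rw [if_neg hle, if_neg hle, map_zero]
    have hD := deltaF M hM σ
    rw [← hn] at hD
    have hsplitD := (Finset.add_sum_erase (permsOf n)
      (fun w => if weakLe σ.1 w then Dsum M w else 0) hmem).symm
    rw [if_pos (weakLe_refl σ.1)] at hsplitD
    rw [hMeq, map_sub, map_sum, hD, hsplitD, Finset.sum_congr rfl hterm]
    abel

end DeltaM

section BasisM

open scoped Classical

lemma M_coeff (M : List ℕ → ZS)
    (hM : ∀ σ : PW, Finsupp.single σ (1 : ℤ) =
      ∑ w ∈ permsOf σ.1.length, if weakLe σ.1 w then M w else 0) :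
    ∀ σ : PW, (M σ.1) σ = 1 ∧
      (∀ τ : PW, (M σ.1) τ ≠ 0 → τ.1.length = σ.1.length ∧ weakLe σ.1 τ.1) := by
  suffices H : ∀ k : ℕ, ∀ σ : PW, wMeasure σ.1 ≤ k → ((M σ.1) σ = 1 ∧
      (∀ τ : PW, (M σ.1) τ ≠ 0 → τ.1.length = σ.1.length ∧ weakLe σ.1 τ.1)) by
    exact fun σ => H (wMeasure σ.1) σ le_rfl
  intro k
  induction k using Nat.strong_induction_on with
  | _ k ih =>
    intro σ hk
    set n := σ.1.length with hn
    have hmem : σ.1 ∈ permsOf n := mem_self_permsOf σ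
    have hsplit := (Finset.add_sum_erase (permsOf n)
      (fun w => if weakLe σ.1 w then M w else 0) hmem).symm
    rw [if_pos (weakLe_refl σ.1)] at hsplit
    have hMeq : M σ.1 = Finsupp.single σ (1 : ℤ)
        - ∑ w ∈ (permsOf n).erase σ.1, (if weakLe σ.1 w then M w else 0) := by
      rw [hM σ, ← hn, hsplit]
      abel
    have hErase : ∀ w ∈ (permsOf n).erase σ.1, IsPermWord w ∧ w.length = n ∧ w ≠ σ.1 := by
      intro w hw
      obtain ⟨hne, hwp⟩ := Finset.mem_erase.1 hw
      obtain ⟨h1, h2⟩ := mem_permsOf.1 hwp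
      exact ⟨h1, h2, hne⟩
    have hIH : ∀ (w : List ℕ) (hwp : IsPermWord w), w ∈ (permsOf n).erase σ.1 →
        weakLe σ.1 w →
        ((M w) ⟨w, hwp⟩ = 1 ∧
          ∀ τ : PW, (M w) τ ≠ 0 → τ.1.length = w.length ∧ weakLe w τ.1) := by
      intro w hwp hw hle
      obtain ⟨hwperm, hwl, hne⟩ := hErase w hw
      have hlt : wMeasure w < wMeasure σ.1 :=
        wMeasure_lt σ.2 hwperm (by omega) hle (fun h => hne h.symm)
      exact ih (wMeasure w) (by omega) ⟨w, hwp⟩ le_rfl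
    constructor
    · rw [hMeq, Finsupp.sub_apply, Finsupp.single_eq_same, Finset.sum_apply']
      rw [Finset.sum_eq_zero]
      · ring
      · intro w hw
        obtain ⟨hwperm, hwl, hne⟩ := hErase w hw
        by_cases hle : weakLe σ.1 w
        · rw [if_pos hle]
          by_contra hnz
          have h2 := ((hIH w hwperm hw hle).2 σ hnz)
          exact hne (weakLe_antisymm hwperm σ.2 (by omega) h2.2 hle)
        · rw [if_neg hle, Finsupp.zero_apply]
    · intro τ hτ
      by_cases hτσ : τ = σ
      · subst hτσ
        exact ⟨rfl, weakLe_refl _⟩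
      · rw [hMeq, Finsupp.sub_apply, Finsupp.single_eq_of_ne' (Ne.symm hτσ),
          Finset.sum_apply'] at hτ
        have hex : ∃ w ∈ (permsOf n).erase σ.1,
            ((if weakLe σ.1 w then M w else 0) : ZS) τ ≠ 0 := by
          by_contra hall
          push_neg at hall
          rw [Finset.sum_eq_zero hall] at hτ
          simp at hτ
        obtain ⟨w, hw, hwnz⟩ := hex
        have hle : weakLe σ.1 w := by
          by_contra hle
          rw [if_neg hle, Finsupp.zero_apply] at hwnz
          exact hwnz rfl
        rw [if_pos hle] at hwnz
        obtain ⟨hwperm, hwl, hne⟩ := hErase w hw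
        obtain ⟨h1, h2⟩ := (hIH w hwperm hw hle).2 τ hwnz
        exact ⟨by omega, Set.Subset.trans hle h2⟩

lemma M_indep (M : List ℕ → ZS)
    (hM : ∀ σ : PW, Finsupp.single σ (1 : ℤ) =
      ∑ w ∈ permsOf σ.1.length, if weakLe σ.1 w then M w else 0) :
    LinearIndependent ℤ (fun σ : PW => M σ.1) := by
  rw [linearIndependent_iff']
  intro s g hsum i hi
  by_contra hgi
  set S' : Finset PW := s.filter (fun σ => g σ ≠ 0) with hS'
  have hiS' : i ∈ S' := Finset.mem_filter.2 ⟨hi, hgi⟩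
  set n := i.1.length with hn
  set S'' : Finset PW := S'.filter (fun σ => σ.1.length = n) with hS''
  have hiS'' : i ∈ S'' := Finset.mem_filter.2 ⟨hiS', rfl⟩
  obtain ⟨τ, hτm, hτmin⟩ := Finset.exists_min_image S'' (fun σ => (invFin σ.1).card)
    ⟨i, hiS''⟩
  obtain ⟨hτS', hτlen⟩ := Finset.mem_filter.1 hτm
  obtain ⟨hτs, hgτ⟩ := Finset.mem_filter.1 hτS'
  have heval : (∑ σ ∈ s, g σ • M σ.1) τ = 0 := by rw [hsum]; rfl
  rw [Finset.sum_apply'] at heval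
  have hz : ∀ σ ∈ s, σ ≠ τ → (g σ • M σ.1) τ = 0 := by
    intro σ hσs hσne
    rw [Finsupp.smul_apply]
    by_cases hg : g σ = 0
    · rw [hg]; simp
    · by_cases hc : (M σ.1) τ = 0
      · rw [hc]; simp
      · exfalso
        obtain ⟨hlen, hle⟩ := (M_coeff M hM σ).2 τ hc
        have hσS'' : σ ∈ S'' := Finset.mem_filter.2
          ⟨Finset.mem_filter.2 ⟨hσs, hg⟩, by omega⟩
        have hcard : (invFin τ.1).card ≤ (invFin σ.1).card := hτmin σ hσS''
        have hsub : invFin σ.1 ⊆ invFin τ.1 := fun p hp =>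
          (mem_invFin τ.2).2 (hle ((mem_invFin σ.2).1 hp))
        have heq : invFin σ.1 = invFin τ.1 := Finset.eq_of_subset_of_card_le hsub hcard
        have hinv : invSet σ.1 = invSet τ.1 := by
          ext p
          rw [← mem_invFin σ.2, ← mem_invFin τ.2, heq]
        have : σ.1 = τ.1 := eq_of_invSet_eq (nodup_of_isPermWord σ.2)
          (σ.2.trans (by rw [show σ.1.length = τ.1.length by omega]; exact τ.2.symm)) hinv
        exact hσne (Subtype.ext this)
  rw [Finset.sum_eq_single τ hz (fun hτs' => absurd hτs hτs')] at heval
  rw [Finsupp.smul_apply, (M_coeff M hM τ).1] at heval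
  simp at heval
  exact hgτ heval

lemma M_span (M : List ℕ → ZS)
    (hM : ∀ σ : PW, Finsupp.single σ (1 : ℤ) =
      ∑ w ∈ permsOf σ.1.length, if weakLe σ.1 w then M w else 0) :
    ⊤ ≤ Submodule.span ℤ (Set.range (fun σ : PW => M σ.1)) := by
  intro x _
  have hsingle : ∀ σ : PW, Finsupp.single σ (1 : ℤ) ∈
      Submodule.span ℤ (Set.range (fun σ : PW => M σ.1)) := by
    intro σ
    rw [hM σ]
    apply Submodule.sum_mem
    intro w hw
    obtain ⟨hwp, hwl⟩ := mem_permsOf.1 hw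
    by_cases hle : weakLe σ.1 w
    · rw [if_pos hle]
      exact Submodule.subset_span ⟨⟨w, hwp⟩, rfl⟩
    · rw [if_neg hle]
      exact Submodule.zero_mem _
  induction x using Finsupp.induction with
  | zero => exact Submodule.zero_mem _
  | single_add a b f _ _ ihf =>
    apply Submodule.add_mem _ _ (ihf trivial)
    have : Finsupp.single a b = b • Finsupp.single a (1 : ℤ) := by
      rw [Finsupp.smul_single, smul_eq_mul, mul_one]
    rw [this]
    exact Submodule.smul_mem _ b (hsingle a)

noncomputable def bM (M : List ℕ → ZS)
    (hM : ∀ σ : PW, Finsupp.single σ (1 : ℤ) =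
      ∑ w ∈ permsOf σ.1.length, if weakLe σ.1 w then M w else 0) : Module.Basis PW ℤ ZS :=
  Module.Basis.mk (M_indep M hM) (M_span M hM)

lemma bM_apply (M) (hM) (σ : PW) : bM M hM σ = M σ.1 := Module.Basis.mk_apply _ _ _

end BasisM

section Coord

open scoped Classical TensorProduct

noncomputable def phiT (M : List ℕ → ZS)
    (hM : ∀ σ : PW, Finsupp.single σ (1 : ℤ) =
      ∑ w ∈ permsOf σ.1.length, if weakLe σ.1 w then M w else 0)
    (p : PW × PW) : (ZS ⊗[ℤ] ZS) →ₗ[ℤ] ℤ :=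
  (Finsupp.lapply p) ∘ₗ (((bM M hM).tensorProduct (bM M hM)).repr.toLinearMap)

lemma phiT_tmul (M) (hM) (u v : List ℕ) (hu : IsPermWord u) (hv : IsPermWord v)
    (p : PW × PW) :
    phiT M hM p (M u ⊗ₜ[ℤ] M v) = if u = p.1.1 ∧ v = p.2.1 then 1 else 0 := by
  have h1 : M u ⊗ₜ[ℤ] M v = ((bM M hM).tensorProduct (bM M hM)) (⟨u, hu⟩, ⟨v, hv⟩) := by
    rw [Module.Basis.tensorProduct_apply, bM_apply, bM_apply]
  unfold phiT
  show Finsupp.lapply (R := ℤ) (M := ℤ) p (((bM M hM).tensorProduct (bM M hM)).repr (M u ⊗ₜ[ℤ] M v)) = _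
  rw [h1, Module.Basis.repr_self, Finsupp.lapply_apply, Finsupp.single_apply]
  congr 1
  simp only [Prod.ext_iff, Subtype.ext_iff]

/-- the middle part of `Dsum`. -/
noncomputable def MidSum (M : List ℕ → ZS) (w : List ℕ) : ZS ⊗[ℤ] ZS :=
  ∑ i ∈ Finset.Ioo 0 w.length,
    if condS w i then
      M (w.filter (· < i)) ⊗ₜ[ℤ] M (stW (w.filter (fun x => i ≤ x)))
    else 0

lemma filter_lt_zero (w : List ℕ) : w.filter (· < 0) = [] := by
  rw [List.filter_eq_nil_iff]; intro a _; simp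

lemma filter_ge_zero (w : List ℕ) : w.filter (fun x => 0 ≤ x) = w := by
  rw [List.filter_eq_self]; intro a _; simp

lemma filter_lt_len {w : List ℕ} (h : IsPermWord w) : w.filter (· < w.length) = w := by
  rw [List.filter_eq_self]; intro a ha; simpa using (permword_mem_iff h).1 ha

lemma filter_ge_len {w : List ℕ} (h : IsPermWord w) :
    w.filter (fun x => w.length ≤ x) = [] := by
  rw [List.filter_eq_nil_iff]; intro a ha
  have := (permword_mem_iff h).1 ha
  simpa using this

lemma triangle_nil_right (v : List ℕ) : triangle v [] = v := by
  unfold triangle; simp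

lemma triangle_nil_left (u : List ℕ) : triangle [] u = u := by
  unfold triangle; simp

lemma condS_zero {w : List ℕ} (h : IsPermWord w) : condS w 0 := by
  unfold condS
  rw [filter_lt_zero, filter_ge_zero, stW_eq_self h, triangle_nil_right]

lemma condS_len {w : List ℕ} (h : IsPermWord w) : condS w w.length := by
  unfold condS
  rw [filter_lt_len h, filter_ge_len h]
  show w = triangle (stW []) w
  rw [show stW [] = [] from rfl, triangle_nil_left]

lemma Dsum_nil (M : List ℕ → ZS) : Dsum M [] = M [] ⊗ₜ[ℤ] M [] := by
  unfold Dsum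
  rw [show ([] : List ℕ).length = 0 from rfl]
  rw [Finset.sum_range_one]
  rw [if_pos (show condS [] 0 from rfl)]
  rfl

lemma Dsum_decomp (M : List ℕ → ZS) (σ : PW) (hne : σ.1 ≠ []) :
    Dsum M σ.1 = M σ.1 ⊗ₜ[ℤ] M [] + M [] ⊗ₜ[ℤ] M σ.1 + MidSum M σ.1 := by
  set n := σ.1.length with hn
  have hn1 : 1 ≤ n := by
    rw [hn]
    exact List.length_pos_iff.2 hne -- check name
  have hrange : Finset.range (n + 1) = insert 0 (insert n (Finset.Ioo 0 n)) := by
    ext j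
    simp only [Finset.mem_range, Finset.mem_insert, Finset.mem_Ioo]
    omega
  unfold Dsum
  rw [← hn, hrange, Finset.sum_insert (by simp; omega), Finset.sum_insert (by simp)]
  have h0 : (if condS σ.1 0 then
      M (σ.1.filter (· < 0)) ⊗ₜ[ℤ] M (stW (σ.1.filter (fun x => 0 ≤ x))) else 0)
      = M [] ⊗ₜ[ℤ] M σ.1 := by
    rw [if_pos (condS_zero σ.2), filter_lt_zero, filter_ge_zero, stW_eq_self σ.2]
  have hnn : (if condS σ.1 n then
      M (σ.1.filter (· < n)) ⊗ₜ[ℤ] M (stW (σ.1.filter (fun x => n ≤ x))) else 0)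
      = M σ.1 ⊗ₜ[ℤ] M [] := by
    rw [hn, if_pos (condS_len σ.2), filter_lt_len σ.2, filter_ge_len σ.2]
    rfl
  rw [h0, hnn]
  show _ = _ + _ + MidSum M σ.1
  unfold MidSum
  rw [← hn]
  abel

lemma phiT_MidSum (M) (hM) (σ' : PW) (p : PW × PW) :
    phiT M hM p (MidSum M σ'.1) =
      if (p.1.1 ≠ [] ∧ p.2.1 ≠ [] ∧ σ'.1 = triangle p.2.1 p.1.1) then 1 else 0 := by
  set n := σ'.1.length with hn
  unfold MidSum
  rw [map_sum]
  have hterm : ∀ i ∈ Finset.Ioo 0 n,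
      phiT M hM p (if condS σ'.1 i then
        M (σ'.1.filter (· < i)) ⊗ₜ[ℤ] M (stW (σ'.1.filter (fun x => i ≤ x))) else 0)
      = if condS σ'.1 i then
          (if σ'.1.filter (· < i) = p.1.1 ∧ stW (σ'.1.filter (fun x => i ≤ x)) = p.2.1
            then 1 else 0) else 0 := by
    intro i hi
    by_cases hc : condS σ'.1 i
    · rw [if_pos hc, if_pos hc,
        phiT_tmul M hM _ _ (isPermWord_filter_lt σ'.2 i) (isPermWord_stW_filter σ'.2 _)]
    · rw [if_neg hc, if_neg hc, map_zero]
  rw [Finset.sum_congr rfl hterm]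
  by_cases hcond : p.1.1 ≠ [] ∧ p.2.1 ≠ [] ∧ σ'.1 = triangle p.2.1 p.1.1
  · rw [if_pos hcond]
    obtain ⟨h1, h2, h3⟩ := hcond
    have hp1 : IsPermWord p.1.1 := p.1.2
    have hp2 : IsPermWord p.2.1 := p.2.2
    set i₀ := p.1.1.length with hi₀def
    have hlen : n = p.2.1.length + p.1.1.length := by
      rw [hn, h3]; unfold triangle; rw [List.length_append, List.length_map]
    have hl1 : 0 < p.1.1.length := List.length_pos_iff.2 h1
    have hl2 : 0 < p.2.1.length := List.length_pos_iff.2 h2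
    have hi₀mem : i₀ ∈ Finset.Ioo 0 n := by
      rw [Finset.mem_Ioo]; omega
    rw [Finset.sum_eq_single i₀]
    · have hcondi₀ : condS σ'.1 i₀ := by
        rw [h3]; exact condS_triangle hp1 hp2
      rw [if_pos hcondi₀]
      have e1 : σ'.1.filter (· < i₀) = p.1.1 := by
        rw [h3]; exact triangle_filter_lt hp1
      have e2 : stW (σ'.1.filter (fun x => i₀ ≤ x)) = p.2.1 := by
        rw [h3]; exact stW_triangle_ge hp1 hp2
      rw [if_pos ⟨e1, e2⟩]
    · intro i hi hine
      by_cases hc : condS σ'.1 i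
      · rw [if_pos hc]
        apply if_neg
        rintro ⟨e1, _⟩
        apply hine
        have : (σ'.1.filter (· < i)).length = i := by
          rw [length_filter_lt' σ'.2, ← hn]
          have := Finset.mem_Ioo.1 hi
          omega
        rw [e1] at this
        omega
      · rw [if_neg hc]
    · intro habs
      exact absurd hi₀mem habs
  · rw [if_neg hcond, Finset.sum_eq_zero]
    intro i hi
    by_cases hc : condS σ'.1 i
    · rw [if_pos hc]
      apply if_neg
      rintro ⟨e1, e2⟩
      apply hcond
      have hi' := Finset.mem_Ioo.1 hi
      have hul : (σ'.1.filter (· < i)).length = i := by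
        rw [length_filter_lt' σ'.2, ← hn]; omega
      have hvl : (stW (σ'.1.filter (fun x => i ≤ x))).length = n - i := by
        rw [length_stW, length_filter_ge' σ'.2, ← hn]
      refine ⟨?_, ?_, ?_⟩
      · rw [← e1]
        intro hnil
        rw [hnil] at hul
        simp at hul
        omega
      · rw [← e2]
        intro hnil
        rw [hnil] at hvl
        simp at hvl
        omega
      · rw [← e1, ← e2]
        exact hc
    · rw [if_neg hc]

lemma oneZS_eq (M : List ℕ → ZS) (hM : ∀ σ : PW, Finsupp.single σ (1 : ℤ) =
      ∑ w ∈ permsOf σ.1.length, if weakLe σ.1 w then M w else 0) :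
    oneZS = M [] := by
  have h := hM ⟨[], by simp [IsPermWord]⟩
  have hp : permsOf (0 : ℕ) = {[]} := by
    unfold permsOf
    rw [show List.range 0 = [] from rfl, List.permutations_nil]
    rfl
  simp only at h
  rw [show (([] : List ℕ)).length = 0 from rfl, hp, Finset.sum_singleton,
    if_pos (weakLe_refl [])] at h
  exact h

end Coord

section Final

open scoped Classical TensorProduct

lemma prim_iff (M : List ℕ → ZS)
    (hM : ∀ σ : PW, Finsupp.single σ (1 : ℤ) =
      ∑ w ∈ permsOf σ.1.length, if weakLe σ.1 w then M w else 0) (σ : PW) :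
    (Delta (M σ.1) = M σ.1 ⊗ₜ[ℤ] oneZS + oneZS ⊗ₜ[ℤ] M σ.1) ↔ TriIndec σ.1 := by
  rw [deltaM M hM σ, oneZS_eq M hM]
  constructor
  · intro h
    have hne : σ.1 ≠ [] := by
      intro hnil
      rw [hnil, Dsum_nil] at h
      have hz : M [] ⊗ₜ[ℤ] M [] = 0 := by
        have h' : M [] ⊗ₜ[ℤ] M [] = M [] ⊗ₜ[ℤ] M [] + M [] ⊗ₜ[ℤ] M [] := h
        exact (left_eq_add.1 h')
      have hφ := congrArg (phiT M hM (⟨[], by simp [IsPermWord]⟩, ⟨[], by simp [IsPermWord]⟩)) hz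
      rw [map_zero, phiT_tmul M hM [] [] (by simp [IsPermWord]) (by simp [IsPermWord])] at hφ
      simp at hφ
    refine ⟨hne, ?_⟩
    intro u v hu hv heq
    by_contra hcon
    push_neg at hcon
    obtain ⟨hun, hvn⟩ := hcon
    have hmid : MidSum M σ.1 = 0 := by
      rw [Dsum_decomp M σ hne] at h
      exact add_eq_left.1 h
    have hφ := congrArg (phiT M hM (⟨u, hu⟩, ⟨v, hv⟩)) hmid
    rw [map_zero, phiT_MidSum M hM σ (⟨u, hu⟩, ⟨v, hv⟩)] at hφ
    rw [if_pos ⟨hun, hvn, heq⟩] at hφ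
    exact one_ne_zero hφ
  · rintro ⟨hne, hdec⟩
    have hmid : MidSum M σ.1 = 0 := by
      unfold MidSum
      apply Finset.sum_eq_zero
      intro i hi
      have hi' := Finset.mem_Ioo.1 hi
      rw [if_neg]
      intro hc
      obtain ⟨u, v, hu, hv, hul, heq⟩ := (condS_iff σ.2 (le_of_lt hi'.2)).1 hc
      have hlen : σ.1.length = v.length + u.length := by
        rw [heq]; unfold triangle; rw [List.length_append, List.length_map]
      rcases hdec u v hu hv heq with h | h
      · rw [h] at hul; simp at hul; omega
      · rw [h] at hlen; simp at hlen; omega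
    rw [Dsum_decomp M σ hne, hmid, add_zero]

end Final

open scoped Classical in
/-- For the monomial basis `(M_σ)` of `ℤS` (defined by Möbius
inversion `σ = Σ_{σ ≤ w} M_w` over the right weak order), `M_σ` is primitive iff
`σ` is `△`-indecomposable (has no global descent); and the primitive elements of
`ℤS` are exactly the span of these `M_σ`. -/
theorem primitives_of_ZS (M : List ℕ → ZS)
    (hM : ∀ σ : PW, Finsupp.single σ (1 : ℤ) =
      ∑ w ∈ permsOf σ.1.length, if weakLe σ.1 w then M w else 0) :
    (∀ σ : PW, (Delta (M σ.1) = M σ.1 ⊗ₜ[ℤ] oneZS + oneZS ⊗ₜ[ℤ] M σ.1) ↔ TriIndec σ.1) ∧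
    {x : ZS | Delta x = x ⊗ₜ[ℤ] oneZS + oneZS ⊗ₜ[ℤ] x} =
      (Submodule.span ℤ {y : ZS | ∃ σ : PW, TriIndec σ.1 ∧ y = M σ.1} : Set ZS) := by
  refine ⟨fun σ => prim_iff M hM σ, ?_⟩
  set ι : ZS →ₗ[ℤ] ZS ⊗[ℤ] ZS :=
    (TensorProduct.mk ℤ ZS ZS).flip oneZS + TensorProduct.mk ℤ ZS ZS oneZS with hι
  have hιap : ∀ y : ZS, ι y = y ⊗ₜ[ℤ] oneZS + oneZS ⊗ₜ[ℤ] y := by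
    intro y
    rw [hι]
    rfl
  ext x
  simp only [Set.mem_setOf_eq, SetLike.mem_coe]
  constructor
  · intro hx
    rw [oneZS_eq M hM] at hx
    set ε : PW := ⟨[], by simp [IsPermWord]⟩ with hεdef
    set r := (bM M hM).repr x with hr
    have hxe : ∑ σ ∈ r.support, r σ • M σ.1 = x := by
      conv_rhs => rw [← (bM M hM).linearCombination_repr x]
      rw [Finsupp.linearCombination_apply, Finsupp.sum]
      exact Finset.sum_congr rfl (fun σ _ => by rw [bM_apply])
    have hdelta : Delta x = ∑ σ ∈ r.support, r σ • Dsum M σ.1 := by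
      rw [← hxe, map_sum]
      exact Finset.sum_congr rfl (fun σ _ => by rw [map_smul, deltaM M hM σ])
    have hone : x ⊗ₜ[ℤ] M [] + M [] ⊗ₜ[ℤ] x
        = ∑ σ ∈ r.support, r σ • (M σ.1 ⊗ₜ[ℤ] M [] + M [] ⊗ₜ[ℤ] M σ.1) := by
      rw [← hxe, TensorProduct.sum_tmul, TensorProduct.tmul_sum, ← Finset.sum_add_distrib]
      refine Finset.sum_congr rfl (fun σ _ => ?_)
      rw [← TensorProduct.smul_tmul', TensorProduct.tmul_smul, smul_add]
    have hE : ∑ σ ∈ r.support,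
        r σ • (Dsum M σ.1 - (M σ.1 ⊗ₜ[ℤ] M [] + M [] ⊗ₜ[ℤ] M σ.1)) = 0 := by
      have heq : (∑ σ ∈ r.support, r σ • Dsum M σ.1)
          - (∑ σ ∈ r.support, r σ • (M σ.1 ⊗ₜ[ℤ] M [] + M [] ⊗ₜ[ℤ] M σ.1)) = 0 := by
        rw [← hdelta, ← hone, hx]
        abel
      rw [← heq, ← Finset.sum_sub_distrib]
      exact Finset.sum_congr rfl (fun σ _ => by rw [smul_sub])
    have hφE : ∀ (p : PW × PW) (σ' : PW), σ'.1 ≠ [] →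
        phiT M hM p (Dsum M σ'.1 - (M σ'.1 ⊗ₜ[ℤ] M [] + M [] ⊗ₜ[ℤ] M σ'.1))
          = if (p.1.1 ≠ [] ∧ p.2.1 ≠ [] ∧ σ'.1 = triangle p.2.1 p.1.1) then 1 else 0 := by
      intro p σ' hne
      rw [Dsum_decomp M σ' hne, add_sub_cancel_left, phiT_MidSum M hM σ' p]
    have hφEε : ∀ (p : PW × PW) (σ' : PW), σ'.1 = [] →
        phiT M hM p (Dsum M σ'.1 - (M σ'.1 ⊗ₜ[ℤ] M [] + M [] ⊗ₜ[ℤ] M σ'.1))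
          = -(if ([] : List ℕ) = p.1.1 ∧ ([] : List ℕ) = p.2.1 then 1 else 0) := by
      intro p σ' hnil
      rw [hnil, Dsum_nil, map_sub, map_add,
        phiT_tmul M hM [] [] (by simp [IsPermWord]) (by simp [IsPermWord]) p]
      ring
    have hsum0 : ∀ p : PW × PW, ∑ σ ∈ r.support,
        r σ * phiT M hM p (Dsum M σ.1 - (M σ.1 ⊗ₜ[ℤ] M [] + M [] ⊗ₜ[ℤ] M σ.1)) = 0 := by
      intro p
      have hφ := congrArg (phiT M hM p) hE
      rw [map_zero, map_sum] at hφ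
      rw [← hφ]
      exact Finset.sum_congr rfl (fun σ _ => by rw [map_smul, smul_eq_mul])
    have hrε : r ε = 0 := by
      have h0 := hsum0 (ε, ε)
      rw [Finset.sum_eq_single ε (fun σ' hσ' hσ'ne => by
          have hne : σ'.1 ≠ [] := fun h => hσ'ne (Subtype.ext h)
          rw [hφE (ε, ε) σ' hne, if_neg (fun h => h.1 rfl), mul_zero])
        (fun hεn => by rw [Finsupp.notMem_support_iff.1 hεn, zero_mul])] at h0
      rw [hφEε (ε, ε) ε rfl, if_pos ⟨rfl, rfl⟩] at h0
      simpa using h0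
    have hsupptri : ∀ σ ∈ r.support, TriIndec σ.1 := by
      intro σ hσ
      by_contra hnt
      by_cases hnil : σ.1 = []
      · exact (Finsupp.mem_support_iff.1 hσ)
          (by rw [show σ = ε from Subtype.ext hnil]; exact hrε)
      · have hdec : ∃ u v : List ℕ, IsPermWord u ∧ IsPermWord v ∧ σ.1 = triangle v u
            ∧ u ≠ [] ∧ v ≠ [] := by
          unfold TriIndec at hnt
          push_neg at hnt
          obtain ⟨u, v, hu, hv, heq, hun, hvn⟩ := hnt hnil
          exact ⟨u, v, hu, hv, heq, hun, hvn⟩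
        obtain ⟨u, v, hu, hv, heq, hun, hvn⟩ := hdec
        have h0 := hsum0 (⟨u, hu⟩, ⟨v, hv⟩)
        rw [Finset.sum_eq_single σ (fun σ' hσ' hσ'ne => by
            by_cases hnil' : σ'.1 = []
            · rw [hφEε (⟨u, hu⟩, ⟨v, hv⟩) σ' hnil',
                if_neg (fun h => hun h.1.symm), neg_zero, mul_zero]
            · rw [hφE (⟨u, hu⟩, ⟨v, hv⟩) σ' hnil']
              rw [if_neg (fun h => hσ'ne (Subtype.ext (h.2.2.trans heq.symm))), mul_zero])
          (fun hσn => absurd hσ hσn)] at h0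
        rw [hφE (⟨u, hu⟩, ⟨v, hv⟩) σ hnil, if_pos ⟨hun, hvn, heq⟩, mul_one] at h0
        exact (Finsupp.mem_support_iff.1 hσ) h0
    rw [← hxe]
    apply Submodule.sum_mem
    intro σ hσ
    exact Submodule.smul_mem _ _ (Submodule.subset_span ⟨σ, hsupptri σ hσ, rfl⟩)
  · intro hx
    have hsub : {y : ZS | ∃ σ : PW, TriIndec σ.1 ∧ y = M σ.1} ⊆ ↑(LinearMap.ker (Delta - ι)) := by
      rintro y ⟨σ, htri, rfl⟩
      rw [SetLike.mem_coe, LinearMap.mem_ker, LinearMap.sub_apply, sub_eq_zero, hιap]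
      exact (prim_iff M hM σ).2 htri
    have hmem := Submodule.span_le.2 hsub hx
    rw [LinearMap.mem_ker, LinearMap.sub_apply, sub_eq_zero, hιap] at hmem
    exact hmem
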